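/- arXiv:1309.3188 — 3 statements merged into one kernel-verified Lean document; each statement's English description precedes it below -/
import Mathlib

section
/- If a Novikov algebra has a left unity e (e·a = a for all a), then the algebra is commutative and associative. -/
/-- A Novikov algebra with a left unity is commutative and associative. -/
theorem novikov_left_unity_comm_assoc {A : Type*} [NonUnitalNonAssocRing A]
    [Module ℂ A] [SMulCommClass ℂ A A] [IsScalarTower ℂ A A]
    (h1 : ∀ a b c : A, (a * b) * c = (a * c) * b)
    (h2 : ∀ a b c : A, (a * b) * c - a * (b * c) = (b * a) * c - b * (a * c))
    (e : A) (he : ∀ a : A, e * a = a) :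
    (∀ a b : A, a * b = b * a) ∧ (∀ a b c : A, (a * b) * c = a * (b * c)) := by
  have comm : ∀ a b : A, a * b = b * a := by
    intro a b
    have := h1 e a b
    rwa [he, he] at this
  refine ⟨comm, fun a b c => ?_⟩
  calc (a * b) * c = (b * a) * c := by rw [comm a b]
    _ = (b * c) * a := h1 b a c
    _ = a * (b * c) := (comm _ _).symm
end

section
/- There is no nonzero skew-symmetric bilinear form f on 𝕋_n satisfying both f(a·b, c) = f(a, c·b) and the cyclic condition f(a·b, c) + f(b·c, a) + f(c·a, b) = 0. -/
open Finset

/-- Multiplication of the algebra `𝕋_n = ℂⁿ` (0-indexed): `e_i · e_j = e_{i+j}`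
if `i+j ≤ n-1`, else `0`. -/
noncomputable def Tmul (n : ℕ) (a b : Fin n → ℂ) : Fin n → ℂ :=
  fun i => ∑ j : Fin n, ∑ k : Fin n,
    if (j : ℕ) + (k : ℕ) = (i : ℕ) then a j * b k else 0

/-- The bilinear form on `𝕋_n` with matrix `F`. -/
noncomputable def TForm (n : ℕ) (F : Matrix (Fin n) (Fin n) ℂ) (a b : Fin n → ℂ) : ℂ :=
  ∑ i : Fin n, ∑ j : Fin n, F i j * a i * b j

/-- The `ℕ`-indexed delta vector: `dlt n c` is the basis vector `e_c` if `c < n`, else `0`. -/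
noncomputable def dlt (n c : ℕ) : Fin n → ℂ := fun m => if c = (m : ℕ) then 1 else 0

lemma tmul_dlt (n : ℕ) (p q : Fin n) :
    Tmul n (dlt n p) (dlt n q) = dlt n ((p : ℕ) + q) := by
  funext i
  simp only [Tmul, dlt, Fin.val_eq_val]
  rw [Finset.sum_eq_single p]
  · rw [Finset.sum_eq_single q]
    · simp
    · intro b _ hb; simp [Ne.symm hb]
    · simp
  · intro b _ hb
    apply Finset.sum_eq_zero; intro k _; simp [Ne.symm hb]
  · simp

lemma tform_dlt (n : ℕ) (F : Matrix (Fin n) (Fin n) ℂ) (p : Fin n) (c : ℕ) :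
    TForm n F (dlt n p) (dlt n c) = if h : c < n then F p ⟨c, h⟩ else 0 := by
  simp only [TForm, dlt, Fin.val_eq_val]
  rw [Finset.sum_eq_single p]
  · have hpp : (if p = p then (1 : ℂ) else 0) = 1 := if_pos rfl
    rw [hpp]
    by_cases h : c < n
    · rw [dif_pos h, Finset.sum_eq_single ⟨c, h⟩]
      · simp
      · intro b _ hb
        have : c ≠ (b : ℕ) := fun he => hb (Fin.ext he.symm)
        simp [this]
      · simp
    · rw [dif_neg h]
      apply Finset.sum_eq_zero; intro j _
      have : c ≠ (j : ℕ) := fun he => h (he ▸ j.isLt)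
      simp [this]
  · intro b _ hb
    apply Finset.sum_eq_zero; intro j _; simp [Ne.symm hb]
  · simp

/-- There is no nonzero skew-symmetric bilinear form on `𝕋_n` satisfying both
the quasi-Frobenius condition and the cyclic condition. -/
theorem Tn_no_second_order_cocycle (n : ℕ) (F : Matrix (Fin n) (Fin n) ℂ)
    (hskew : ∀ i j, F i j = - F j i)
    (hqf : ∀ a b c : Fin n → ℂ,
      TForm n F (Tmul n a b) c = TForm n F a (Tmul n c b))
    (hcyc : ∀ a b c : Fin n → ℂ,
      TForm n F (Tmul n a b) c + TForm n F (Tmul n b c) a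
        + TForm n F (Tmul n c a) b = 0) :
    F = 0 := by
  ext i j
  have hn : 0 < n := i.pos
  set z : Fin n := ⟨0, hn⟩ with hz
  -- Using the unit element `e₀` in the quasi-Frobenius condition:
  -- `F p q = F 0 (p+q)` (or `0` if `p+q ≥ n`), which is symmetric in `p, q`.
  have key : ∀ p q : Fin n,
      F p q = if h : (q : ℕ) + p < n then F z ⟨(q : ℕ) + p, h⟩ else 0 := by
    intro p q
    have h1 := hqf (dlt n z) (dlt n p) (dlt n q)
    rw [tmul_dlt, tmul_dlt] at h1
    have hzp : ((z : ℕ) + (p : ℕ)) = (p : ℕ) := by simp [hz]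
    rw [hzp] at h1
    have e1 : TForm n F (dlt n (p : ℕ)) (dlt n (q : ℕ)) = F p q := by
      rw [tform_dlt]; simp
    rw [e1, tform_dlt] at h1
    exact h1
  have h1 := key i j
  have h2 := key j i
  rw [Nat.add_comm] at h2
  have hsym : F i j = F j i := h1.trans h2.symm
  have h3 := hskew i j
  rw [← hsym] at h3
  have h4 : (2 : ℂ) * F i j = 0 := by linear_combination h3
  simpa using (mul_eq_zero.mp h4).resolve_left two_ne_zero
end

section
/- A skew-symmetric bilinear form f = (f_{ij}) on 𝔸_n satisfies f(a·b, c) = f(a, c·b) and f(a·b, c) + f(b·c, a) + f(c·a, b) = 0 if and only if f_{ij} = 0 whenever both i ≠ n and j ≠ n. -/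
open Finset

/-- Multiplication of the algebra `𝔸_n = ℂⁿ`: `(a·b)^i = a^i b^n`. -/
noncomputable def Amul (n : ℕ) (hn : 0 < n) (a b : Fin n → ℂ) : Fin n → ℂ :=
  fun i => a i * b ⟨n - 1, Nat.sub_lt hn Nat.one_pos⟩

/-- The bilinear form on `𝔸_n` with matrix `F`. -/
noncomputable def AForm (n : ℕ) (F : Matrix (Fin n) (Fin n) ℂ) (a b : Fin n → ℂ) : ℂ :=
  ∑ i : Fin n, ∑ j : Fin n, F i j * a i * b j

lemma Amul_form (n : ℕ) (hn : 0 < n) (F : Matrix (Fin n) (Fin n) ℂ) (a b c : Fin n → ℂ) :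
    AForm n F (Amul n hn a b) c = b ⟨n - 1, Nat.sub_lt hn Nat.one_pos⟩ * AForm n F a c := by
  simp only [AForm, Amul, Finset.mul_sum]
  refine Finset.sum_congr rfl fun i _ => Finset.sum_congr rfl fun j _ => by ring

lemma form_Amul (n : ℕ) (hn : 0 < n) (F : Matrix (Fin n) (Fin n) ℂ) (a b c : Fin n → ℂ) :
    AForm n F a (Amul n hn c b) = b ⟨n - 1, Nat.sub_lt hn Nat.one_pos⟩ * AForm n F a c := by
  simp only [AForm, Amul, Finset.mul_sum]
  refine Finset.sum_congr rfl fun i _ => Finset.sum_congr rfl fun j _ => by ring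

lemma form_single (n : ℕ) (F : Matrix (Fin n) (Fin n) ℂ) (p q : Fin n) :
    AForm n F (Pi.single p 1) (Pi.single q 1) = F p q := by
  simp [AForm, Pi.single_apply, mul_ite, ite_mul, Finset.sum_ite_eq']

lemma form_decomp (n : ℕ) (m : Fin n) (F : Matrix (Fin n) (Fin n) ℂ)
    (hskew : ∀ i j, F i j = - F j i)
    (h0 : ∀ i j : Fin n, i ≠ m → j ≠ m → F i j = 0) (x y : Fin n → ℂ) :
    AForm n F x y = x m * (∑ j, F m j * y j) - y m * (∑ i, F m i * x i) := by
  have hmm : F m m = 0 := by linear_combination (hskew m m) / 2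
  have hF : ∀ i j : Fin n, F i j =
      (if i = m then F m j else 0) + (if j = m then F i m else 0) := by
    intro i j
    by_cases hi : i = m <;> by_cases hj : j = m
    · subst hi; subst hj; simp [hmm]
    · subst hi; simp [hj]
    · subst hj; simp [hi]
    · simp [hi, hj, h0 i j hi hj]
  calc AForm n F x y
      = ∑ i : Fin n, ∑ j : Fin n,
          ((if i = m then F m j * x i * y j else 0)
            + (if j = m then F i m * x i * y j else 0)) := by
        refine Finset.sum_congr rfl fun i _ => Finset.sum_congr rfl fun j _ => ?_
        rw [hF i j]; by_cases hi : i = m <;> by_cases hj : j = m <;> simp [hi, hj] <;> ring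
    _ = (∑ j, F m j * x m * y j) + ∑ i, F i m * x i * y m := by
        simp only [Finset.sum_add_distrib]
        congr 1
        · rw [Finset.sum_comm]
          simp [Finset.sum_ite_eq']
        · simp [Finset.sum_ite_eq']
    _ = x m * (∑ j, F m j * y j) - y m * (∑ i, F m i * x i) := by
        have hneg : ∀ i : Fin n, F i m * x i * y m = -(y m * (F m i * x i)) := fun i => by
          rw [hskew i m]; ring
        simp only [hneg, Finset.sum_neg_distrib, Finset.mul_sum]
        rw [sub_eq_add_neg]
        congr 1
        exact Finset.sum_congr rfl fun j _ => by ring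

/-- A skew-symmetric bilinear form `f` on `𝔸_n` satisfies the quasi-Frobenius
and cyclic conditions iff `f_{ij} = 0` whenever both `i ≠ n` and `j ≠ n`. -/
theorem An_second_order_cocycle_classification (n : ℕ) (hn : 0 < n)
    (F : Matrix (Fin n) (Fin n) ℂ) (hskew : ∀ i j, F i j = - F j i) :
    ((∀ a b c : Fin n → ℂ,
        AForm n F (Amul n hn a b) c = AForm n F a (Amul n hn c b)) ∧
      (∀ a b c : Fin n → ℂ,
        AForm n F (Amul n hn a b) c + AForm n F (Amul n hn b c) a
          + AForm n F (Amul n hn c a) b = 0)) ↔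
    (∀ i j : Fin n, i ≠ ⟨n - 1, Nat.sub_lt hn Nat.one_pos⟩ →
        j ≠ ⟨n - 1, Nat.sub_lt hn Nat.one_pos⟩ → F i j = 0) := by
  set m : Fin n := ⟨n - 1, Nat.sub_lt hn Nat.one_pos⟩ with hm
  constructor
  · rintro ⟨-, hcyc⟩ i j hi hj
    have h := hcyc (Pi.single m 1) (Pi.single j 1) (Pi.single i 1)
    rw [Amul_form, Amul_form, Amul_form, form_single, form_single, form_single] at h
    simp only [Pi.single_apply] at h
    simpa [← hm, Ne.symm hi, Ne.symm hj] using h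
  · intro h0
    refine ⟨fun a b c => ?_, fun a b c => ?_⟩
    · rw [Amul_form, form_Amul]
    · rw [Amul_form, Amul_form, Amul_form,
        form_decomp n m F hskew h0 a c, form_decomp n m F hskew h0 b a,
        form_decomp n m F hskew h0 c b]
      ring
end
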